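/- Under the standing assumptions, for every β with 0 ≤ β ≤ 1 the equilibrium purchase thresholds satisfy 0 < zB*(β) < 1/2 < zA*(β) < 1. -/

import Mathlib

/-- Under the standing assumptions, for every β with 0 ≤ β ≤ 1 the equilibrium
purchase thresholds satisfy 0 < zB*(β) < 1/2 < zA*(β) < 1. -/
theorem stmt_3 (t v α δ : ℝ) (ht : 0 < t) (hδ : 0 < δ) (hδα : δ < α) (hα : α < 1)
    (hv1 : t * (α / ((2 - α) * δ) + 1 / 2) < v) (hv2 : v < 2 * t)
    (β : ℝ) (hβ0 : 0 ≤ β) (hβ1 : β ≤ 1) :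
    let D := 2 * (α + δ) - 3 * α * δ - 2 * β * (α - δ)
    let zA := (v * (α + δ) - (t + v) * (β * (α - δ) + α * δ)) / (t * D)
    let zB := 1 - zA
    0 < zB ∧ zB < 1 / 2 ∧ 1 / 2 < zA ∧ zA < 1 := by
  intro D zA zB
  have h2 : (0:ℝ) < (2 - α) * δ := by nlinarith
  have key : t * α + t * ((2 - α) * δ) / 2 < v * ((2 - α) * δ) := by
    have h := mul_lt_mul_of_pos_right hv1 h2
    have heq : t * (α / ((2 - α) * δ) + 1 / 2) * ((2 - α) * δ)
        = t * α + t * ((2 - α) * δ) / 2 := by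
      rw [mul_assoc, add_mul, div_mul_cancel₀ _ h2.ne']
      ring
    linarith [heq ▸ h]
  have hvt : t < v := by nlinarith [key, h2, mul_pos ht (sub_pos.2 hδα), mul_pos ht hδ]
  have hDpos : 0 < D := by
    show (0:ℝ) < 2 * (α + δ) - 3 * α * δ - 2 * β * (α - δ)
    nlinarith [mul_nonneg (sub_nonneg.2 hβ1) (sub_pos.2 hδα).le]
  have htD : 0 < t * D := mul_pos ht hDpos
  have hzA1 : zA < 1 := by
    show (v * (α + δ) - (t + v) * (β * (α - δ) + α * δ)) / (t * D) < 1
    rw [div_lt_one htD]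
    show v * (α + δ) - (t + v) * (β * (α - δ) + α * δ)
        < t * (2 * (α + δ) - 3 * α * δ - 2 * β * (α - δ))
    nlinarith [mul_nonneg (mul_nonneg (sub_pos.2 hvt).le hβ0) (sub_pos.2 hδα).le,
      mul_pos (sub_pos.2 hv2) (show (0:ℝ) < α + δ - α * δ by nlinarith)]
  have hzA2 : 1 / 2 < zA := by
    show (1:ℝ) / 2 < (v * (α + δ) - (t + v) * (β * (α - δ) + α * δ)) / (t * D)
    rw [lt_div_iff₀ htD]
    have hv0 : 0 < v := lt_trans ht hvt
    nlinarith [mul_nonneg (mul_nonneg hv0.le (sub_nonneg.2 hβ1)) (sub_pos.2 hδα).le]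
  refine ⟨by simp only [zB]; linarith, by simp only [zB]; linarith, hzA2, hzA1⟩
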